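/- A matrix B ∈ F_q^{N×ℓ} is a valid scalar linear encoding matrix for a unicast index coding problem G if and only if there exists a matrix A ∈ F_q^{N×N} that fits G (A_{i,i} = 1 for all i, and A_{j,i} = 0 whenever i ≠ j and j ∉ K_i) whose column space is contained in the column space of B. -/

import Mathlib

open Finset

/-- A unicast index coding problem on `N` receivers: receiver `i` demands message `i`
and knows messages indexed by `K i` as side information, with `i ∉ K i`. -/
structure IndexProblem (N : ℕ) where
  K : Fin N → Finset (Fin N)
  not_self : ∀ i, i ∉ K i

/-- A valid index code over alphabet `A` with message length `m` and codeword length `ℓ`: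
an encoder together with query sets `R i`, such that receiver `i` can decode `x i`
exactly from the queried codeword symbols `c_{R i}` and its side information. -/
structure IndexCode (N : ℕ) (G : IndexProblem N) (A : Type*) (m ℓ : ℕ) where
  enc : (Fin N → Fin m → A) → Fin ℓ → A
  R : Fin N → Finset (Fin ℓ)
  valid : ∀ (i : Fin N) (x y : Fin N → Fin m → A),
    (∀ t ∈ R i, enc x t = enc y t) → (∀ j ∈ G.K i, x j = y j) → x i = y i

/-- The optimal broadcast rate function `β_G^*(r)`: the infimum of broadcast rates `ℓ/m`
over all message lengths `m ≥ 1` and valid index codes with locality at most `r`. -/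
noncomputable def betaStar (A : Type*) {N : ℕ} (G : IndexProblem N) (r : ℝ) : ℝ :=
  sInf {β : ℝ | ∃ (m ℓ : ℕ) (_ : 0 < m) (C : IndexCode N G A m ℓ),
    (∀ i, ((C.R i).card : ℝ) ≤ r * m) ∧ β = (ℓ : ℝ) / m}

/-- A matrix `A` fits the side information graph `G` if its diagonal entries are `1`
and `A j i = 0` for all `i ≠ j` with `j ∉ K i`. -/
def Fits {N : ℕ} {F : Type*} [Field F] (G : IndexProblem N)
    (A : Matrix (Fin N) (Fin N) F) : Prop :=
  (∀ i, A i i = 1) ∧ ∀ i j, j ≠ i → j ∉ G.K i → A j i = 0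

/-- `B` is a valid scalar linear encoding matrix for `G`: every receiver `i` can recover
`x i` from the codeword `c = x B` and its side information `(x j, j ∈ K i)`. -/
def IsValidEncMatrix {N ℓ : ℕ} {F : Type*} [Field F] (G : IndexProblem N)
    (B : Matrix (Fin N) (Fin ℓ) F) : Prop :=
  ∀ (i : Fin N) (x y : Fin N → F),
    Matrix.vecMul x B = Matrix.vecMul y B → (∀ j ∈ G.K i, x j = y j) → x i = y i

/-- The column space of a matrix, i.e. the span of its columns. -/
def colSpace {n ℓ : ℕ} {F : Type*} [Field F] (B : Matrix (Fin n) (Fin ℓ) F) :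
    Submodule F (Fin n → F) :=
  Submodule.span F (Set.range B.transpose)

/-- The dot-product functional with `z`. -/
def dotL {N : ℕ} {F : Type*} [Field F] (z : Fin N → F) : (Fin N → F) →ₗ[F] F where
  toFun v := ∑ j, z j * v j
  map_add' a b := by simp [mul_add, Finset.sum_add_distrib]
  map_smul' c a := by simp [Finset.mul_sum]; ring_nf; simp [mul_assoc, mul_comm, mul_left_comm]

/-- `B ∈ F^{N×ℓ}` is a valid scalar linear encoding matrix for `G` iff there is
a matrix `A` fitting `G` whose column space is contained in the column space of `B`. -/
theorem valid_scalar_linear_iff_fits {N ℓ : ℕ} {F : Type*} [Field F]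
    (G : IndexProblem N) (B : Matrix (Fin N) (Fin ℓ) F) :
    IsValidEncMatrix G B ↔
      ∃ A : Matrix (Fin N) (Fin N) F, Fits G A ∧ colSpace A ≤ colSpace B := by
    classical
  set e : Fin N → (Fin N → F) := fun i j => if i = j then 1 else 0 with he
  constructor
  · intro hB
    have key : ∀ i : Fin N, e i ∈
        colSpace B ⊔ Submodule.span F (e '' (G.K i : Set (Fin N))) := by
      intro i
      by_contra hmem
      obtain ⟨f, hf0, hf⟩ :=
        Submodule.exists_dual_map_eq_bot_of_notMem hmem inferInstance
      have hfW : ∀ v ∈ colSpace B ⊔ Submodule.span F (e '' (G.K i : Set (Fin N))),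
          f v = 0 := by
        intro v hv
        have : f v ∈ Submodule.map f _ := Submodule.mem_map_of_mem hv
        rw [hf] at this
        exact (Submodule.mem_bot F).mp this
      set z : Fin N → F := fun j => f (e j) with hz
      have hzB : Matrix.vecMul z B = Matrix.vecMul 0 B := by
        funext t
        have hcol : (B.transpose t) ∈
            colSpace B ⊔ Submodule.span F (e '' (G.K i : Set (Fin N))) :=
          Submodule.mem_sup_left (Submodule.subset_span ⟨t, rfl⟩)
        have h0 := hfW _ hcol
        rw [LinearMap.pi_apply_eq_sum_univ f (B.transpose t)] at h0
        simp only [Matrix.vecMul, dotProduct, Matrix.zero_apply, zero_mul,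
          Finset.sum_const_zero, Pi.zero_apply]
        rw [← h0]
        exact Finset.sum_congr rfl fun j _ => by
          simp [Matrix.transpose_apply, smul_eq_mul, mul_comm, hz, he]
      have hside : ∀ j ∈ G.K i, z j = (0 : Fin N → F) j := by
        intro j hj
        have : e j ∈ colSpace B ⊔ Submodule.span F (e '' (G.K i : Set (Fin N))) :=
          Submodule.mem_sup_right (Submodule.subset_span ⟨j, by simpa using hj, rfl⟩)
        simpa [hz] using hfW _ this
      have := hB i z 0 hzB hside
      apply hf0
      simpa [hz] using this
    choose b hb s hs hbs using fun i => Submodule.mem_sup.mp (key i)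
    have hs0 : ∀ i j, j ∉ G.K i → s i j = 0 := by
      intro i j hj
      have hle : Submodule.span F (e '' (G.K i : Set (Fin N))) ≤
          LinearMap.ker (LinearMap.proj j : (Fin N → F) →ₗ[F] F) := by
        rw [Submodule.span_le]
        rintro _ ⟨j', hj', rfl⟩
        simp only [SetLike.mem_coe, LinearMap.mem_ker, LinearMap.proj_apply]
        have : j' ≠ j := fun h => hj (h ▸ hj')
        simp [he, this]
      simpa using hle (hs i)
    refine ⟨Matrix.of fun j i => b i j, ⟨?_, ?_⟩, ?_⟩
    · intro i
      have h := congrFun (hbs i) i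
      simp only [Pi.add_apply, he, hs0 i i (G.not_self i), if_pos rfl, add_zero] at h
      simpa [Matrix.of_apply] using h
    · intro i' j hji hjK
      have h := congrFun (hbs i') j
      have hne : i' ≠ j := fun h' => hji h'.symm
      simp only [Pi.add_apply, he, hs0 i' j hjK, if_neg hne, add_zero] at h
      simpa [Matrix.of_apply] using h
    · rw [colSpace, Submodule.span_le]
      rintro _ ⟨i', rfl⟩
      have : (Matrix.of fun j i => b i j).transpose i' = b i' := by
        funext j; simp [Matrix.transpose_apply]
      rw [this]
      exact hb i'
  · rintro ⟨A, ⟨hdiag, hoff⟩, hle⟩ i x y hxy hside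
    set z : Fin N → F := x - y with hz
    have hzB : ∀ t, ∑ j, z j * B j t = 0 := by
      intro t
      have := congrFun hxy t
      simp only [Matrix.vecMul, dotProduct] at this
      have : ∑ j, x j * B j t - ∑ j, y j * B j t = 0 := sub_eq_zero.mpr this
      rw [← Finset.sum_sub_distrib] at this
      simpa [hz, sub_mul] using this
    have hker : colSpace B ≤ LinearMap.ker (dotL z) := by
      rw [colSpace, Submodule.span_le]
      rintro _ ⟨t, rfl⟩
      simpa [dotL, Matrix.transpose_apply] using hzB t
    have hcolA : A.transpose i ∈ colSpace B :=
      hle (Submodule.subset_span ⟨i, rfl⟩)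
    have h0 : ∑ j, z j * A j i = 0 := by
      simpa [dotL] using hker hcolA
    have hzi : z i = 0 := by
      rw [Finset.sum_eq_single i] at h0
      · simpa [hdiag i] using h0
      · intro j _ hji
        by_cases hjK : j ∈ G.K i
        · have : z j = 0 := by simp [hz, sub_eq_zero.mpr (hside j hjK)]
          simp [this]
        · simp [hoff i j hji hjK]
      · simp
    have := sub_eq_zero.mp (by simpa [hz] using hzi)
    exact this
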